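/- For a nonempty set X, the following are equivalent: (1) |X| = 4; (2) there exists a semimetric d on X such that every permutation of X is a combinatorial self similarity of (X,d), but d is neither strongly rigid nor discrete. -/

import Mathlib

open Cardinal

def IsSemimetric {X : Type*} (d : X → X → ℝ) : Prop :=
  (∀ x y, d x y = d y x) ∧ (∀ x y, 0 ≤ d x y) ∧ (∀ x y, d x y = 0 ↔ x = y)

/-- `Ψ : Y ≃ X` is a combinatorial similarity of `(X,d)` and `(Y,ρ)`:
there is a bijection `f` from the range of `d` onto the range of `ρ`
with `ρ x y = f (d (Ψ x) (Ψ y))`. -/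
def CombSimF {X Y : Type*} (d : X → X → ℝ) (ρ : Y → Y → ℝ) (Ψ : Y ≃ X) : Prop :=
  ∃ f : ℝ → ℝ, Set.BijOn f (Set.range (Function.uncurry d)) (Set.range (Function.uncurry ρ)) ∧
    ∀ x y : Y, ρ x y = f (d (Ψ x) (Ψ y))

/-- Combinatorial self similarity, in the equivalent "equality of distances" form. -/
def CombSelfSim {X : Type*} (d : X → X → ℝ) (Φ : Equiv.Perm X) : Prop :=
  ∀ x y u v : X, d x y = d u v ↔ d (Φ x) (Φ y) = d (Φ u) (Φ v)

def StronglyRigid {X : Type*} (d : X → X → ℝ) : Prop :=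
  ∀ x y u v : X, d x y = d u v → d x y ≠ 0 → (x = u ∧ y = v) ∨ (x = v ∧ y = u)

def DiscreteSemimetric {X : Type*} (d : X → X → ℝ) : Prop :=
  Cardinal.mk (Set.range (Function.uncurry d)) ≤ 2

/-- every three-point subspace is strongly rigid -/
def WeaklyRigid {X : Type*} (d : X → X → ℝ) : Prop :=
  ∀ x y z : X, x ≠ y → y ≠ z → x ≠ z →
    d x y ≠ d y z ∧ d y z ≠ d z x ∧ d z x ≠ d x y

/-- the subspaces `A` and `B` of `(X,d)` are isometric -/
def IsometricSubsets {X : Type*} (d : X → X → ℝ) (A B : Set X) : Prop :=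
  ∃ e : A ≃ B, ∀ a b : A, d (e a) (e b) = d (a : X) (b : X)

set_option maxHeartbeats 1000000 in
lemma xor_key : ∀ (Ψ : Equiv.Perm (Fin 4)) (i j u v : Fin 4),
    (i.val ^^^ j.val = u.val ^^^ v.val) ↔
    ((Ψ i).val ^^^ (Ψ j).val = (Ψ u).val ^^^ (Ψ v).val) := by decide

/-- If some "cherry" has two equal distances, then all distances between distinct
points are equal, hence the semimetric is discrete. -/
lemma caseA {X : Type*} {d : X → X → ℝ} (hsym : ∀ x y, d x y = d y x)
    (hsim : ∀ Φ : Equiv.Perm X, CombSelfSim d Φ)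
    (hzero : ∀ x y, d x y = 0 ↔ x = y)
    {a b c : X} (hab : a ≠ b) (hac : a ≠ c) (hbc : b ≠ c)
    (h : d a b = d a c) : DiscreteSemimetric d := by
  classical
  have step1 : ∀ w, w ≠ a → d a w = d a b := by
    intro w hw
    by_cases hwb : w = b
    · rw [hwb]
    by_cases hwc : w = c
    · rw [hwc]; exact h.symm
    have key := (hsim (Equiv.swap c w) a b a c).mp h
    rw [Equiv.swap_apply_of_ne_of_ne hac (Ne.symm hw),
        Equiv.swap_apply_of_ne_of_ne hbc (fun hh => hwb hh.symm),
        Equiv.swap_apply_left] at key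
    exact key.symm
  have step2 : ∀ p q : X, p ≠ q → d p q = d a b := by
    intro p q hpq
    by_cases hpa : p = a
    · subst hpa; exact step1 q (Ne.symm hpq)
    have hpa' : p ≠ a := hpa
    set σ := Equiv.swap a p with hσ
    have hσa : σ a = p := Equiv.swap_apply_left a p
    have hσp : σ p = a := Equiv.swap_apply_right a p
    have hσq : σ (σ q) = q := Equiv.swap_apply_self a p q
    have hq' : σ q ≠ a := by
      intro hh
      have := congrArg σ hh
      rw [hσq, hσa] at this
      exact hpq this.symm
    have h1 : d a (σ q) = d a b := step1 _ hq'
    have h2 : d a p = d a b := step1 p hpa'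
    have h3 := (hsim σ a (σ q) a p).mp (h1.trans h2.symm)
    rw [hσa, hσq, hσp] at h3
    rw [h3, hsym p a]
    exact h2
  have hsub : Set.range (Function.uncurry d) ⊆ {0, d a b} := by
    rintro r ⟨⟨p, q⟩, rfl⟩
    by_cases hpq : p = q
    · left
      exact (hzero p q).mpr hpq
    · right
      exact step2 p q hpq
  calc Cardinal.mk (Set.range (Function.uncurry d))
      ≤ Cardinal.mk ({0, d a b} : Set ℝ) := Cardinal.mk_le_mk_of_subset hsub
    _ ≤ Cardinal.mk ({d a b} : Set ℝ) + 1 := Cardinal.mk_insert_le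
    _ = 2 := by rw [Cardinal.mk_singleton]; exact one_add_one_eq_two

theorem stmt14 {X : Type*} [Nonempty X] :
    Nat.card X = 4 ↔
      ∃ d : X → X → ℝ, IsSemimetric d ∧
        (∀ Φ : Equiv.Perm X, CombSelfSim d Φ) ∧
        ¬StronglyRigid d ∧ ¬DiscreteSemimetric d := by
  constructor
  · intro hcard
    have : Finite X := Nat.finite_of_card_ne_zero (by omega)
    obtain ⟨e⟩ : Nonempty (X ≃ Fin 4) := ⟨Finite.equivFinOfCardEq hcard⟩
    refine ⟨fun x y => (((e x).val ^^^ (e y).val : ℕ) : ℝ), ⟨?_, ?_, ?_⟩, ?_, ?_, ?_⟩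
    · intro x y
      show (((e x).val ^^^ (e y).val : ℕ) : ℝ) = (((e y).val ^^^ (e x).val : ℕ) : ℝ)
      rw [Nat.xor_comm]
    · intro x y; exact Nat.cast_nonneg _
    · intro x y
      rw [Nat.cast_eq_zero, show ∀ a b : ℕ, a ^^^ b = 0 ↔ a = b from fun a b => ⟨fun h => by have := congrArg (a ^^^ ·) h; simp [← Nat.xor_assoc] at this; omega, fun h => by rw [h, Nat.xor_self]⟩]
      exact ⟨fun h => e.injective (Fin.val_injective h), fun h => by rw [h]⟩
    · intro Φ x y u v
      set Ψ : Equiv.Perm (Fin 4) := e.symm.trans (Φ.trans e) with hΨdef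
      have hΨ : ∀ z, e (Φ z) = Ψ (e z) := fun z => by simp [hΨdef]
      rw [Nat.cast_inj, Nat.cast_inj, hΨ x, hΨ y, hΨ u, hΨ v]
      exact xor_key Ψ (e x) (e y) (e u) (e v)
    · intro hSR
      have heq : ∀ i : Fin 4, e (e.symm i) = i := fun i => e.apply_symm_apply i
      have h1 : (((e (e.symm 0)).val ^^^ (e (e.symm 1)).val : ℕ) : ℝ) =
          (((e (e.symm 2)).val ^^^ (e (e.symm 3)).val : ℕ) : ℝ) := by
        rw [heq, heq, heq, heq]
        exact congrArg Nat.cast (by decide)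
      have h2 : (((e (e.symm 0)).val ^^^ (e (e.symm 1)).val : ℕ) : ℝ) ≠ 0 := by
        rw [heq, heq]
        intro hh
        rw [Nat.cast_eq_zero] at hh
        revert hh; decide
      rcases hSR (e.symm 0) (e.symm 1) (e.symm 2) (e.symm 3) h1 h2 with ⟨ha, _⟩ | ⟨ha, _⟩
      · have := e.symm.injective.eq_iff.mp ha; simp at this
      · have := e.symm.injective.eq_iff.mp ha; simp at this
    · intro hD
      set S := Set.range (Function.uncurry
          (fun x y : X => (((e x).val ^^^ (e y).val : ℕ) : ℝ))) with hS
      have hsub : Set.range (fun k : Fin 3 => ((k.val : ℕ) : ℝ)) ⊆ S := by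
        rintro r ⟨k, rfl⟩
        fin_cases k
        · exact ⟨(e.symm 0, e.symm 0), by simp [Function.uncurry]⟩
        · exact ⟨(e.symm 0, e.symm 1), by simp [Function.uncurry]⟩
        · exact ⟨(e.symm 0, e.symm 2), by simp [Function.uncurry]⟩
      have hinj : Function.Injective (fun k : Fin 3 => ((k.val : ℕ) : ℝ)) :=
        fun i j h => Fin.val_injective (Nat.cast_injective h)
      have h3 : (3 : Cardinal) ≤ Cardinal.mk S := by
        calc (3 : Cardinal) = Cardinal.mk (Fin 3) := by simp
          _ = Cardinal.mk (Set.range (fun k : Fin 3 => ((k.val : ℕ) : ℝ))) :=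
              (Cardinal.mk_range_eq _ hinj).symm
          _ ≤ Cardinal.mk S := Cardinal.mk_le_mk_of_subset hsub
      have : (3 : Cardinal) ≤ 2 := le_trans h3 hD
      norm_num at this
  · rintro ⟨d, ⟨hsym, _, hzero⟩, hsim, hSR, hD⟩
    classical
    rw [StronglyRigid] at hSR
    push_neg at hSR
    obtain ⟨x, y, u, v, h1, h2, h3, h4⟩ := hSR
    have hxy : x ≠ y := fun h => h2 ((hzero x y).mpr h)
    have huv : u ≠ v := fun h => h2 (h1.trans ((hzero u v).mpr h))
    by_cases hxu : x = u
    · subst hxu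
      have hyv : y ≠ v := h3 rfl
      have hxv : x ≠ v := fun h => huv h
      exact absurd (caseA hsym hsim hzero hxy hxv hyv h1) hD
    by_cases hxv : x = v
    · subst hxv
      have hyu : y ≠ u := h4 rfl
      have hA : d x y = d x u := by rw [h1, hsym]
      exact absurd (caseA hsym hsim hzero hxy (Ne.symm huv) hyu hA) hD
    by_cases hyu : y = u
    · subst hyu
      have hxv' : x ≠ v := hxv
      have hA : d y x = d y v := by rw [hsym y x, h1]
      exact absurd (caseA hsym hsim hzero (Ne.symm hxy) huv hxv' hA) hD
    by_cases hyv : y = v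
    · subst hyv
      have hxu' : x ≠ u := hxu
      have hA : d y x = d y u := by rw [hsym y x, h1, hsym u y]
      exact absurd (caseA hsym hsim hzero (Ne.symm hxy) (Ne.symm huv) hxu' hA) hD
    -- all four points are distinct: every other point leads to a contradiction
    have hall : ∀ w : X, w = x ∨ w = y ∨ w = u ∨ w = v := by
      intro w
      by_contra hw
      push_neg at hw
      obtain ⟨hwx, hwy, hwu, hwv⟩ := hw
      have key := (hsim (Equiv.swap u w) x y u v).mp h1
      rw [Equiv.swap_apply_of_ne_of_ne hxu (Ne.symm hwx),
          Equiv.swap_apply_of_ne_of_ne hyu (Ne.symm hwy),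
          Equiv.swap_apply_left,
          Equiv.swap_apply_of_ne_of_ne (Ne.symm huv) (Ne.symm hwv)] at key
      have hA : d v u = d v w := by
        rw [hsym v u, hsym v w]
        exact h1.symm.trans key
      exact hD (caseA hsym hsim hzero (Ne.symm huv) (Ne.symm hwv) (Ne.symm hwu) hA)
    have hf : Function.Bijective ![x, y, u, v] := by
      constructor
      · intro i j hij
        fin_cases i <;> fin_cases j <;> simp_all
      · intro w
        rcases hall w with h | h | h | h
        exacts [⟨0, h.symm⟩, ⟨1, h.symm⟩, ⟨2, h.symm⟩, ⟨3, h.symm⟩]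
    exact Nat.card_eq_of_equiv_fin (Equiv.ofBijective _ hf).symm
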